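/- Let G be a graph with |V| = 3δ for some integer δ ≥ 1. Then G has a (|V|/3)-Partitionable fractional perfect matching if and only if V can be partitioned into δ disjoint vertex sets V_1, …, V_δ, each containing exactly three vertices, such that for each j ∈ [δ] the three vertices of V_j induce a triangle in G. -/

import Mathlib

open Finset
open scoped Classical

variable {V : Type*} [Fintype V] [DecidableEq V]

/-- The sum of `f` over the edges (elements of `Sym2 V`) containing the vertex `v`. -/
noncomputable def fracDeg (f : Sym2 V → ℝ) (v : V) : ℝ :=
  ∑ e ∈ Finset.univ.filter (fun e : Sym2 V => v ∈ e), f e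

/-- `f` is a fractional matching of `G`. -/
def IsFracMatching (G : SimpleGraph V) (f : Sym2 V → ℝ) : Prop :=
  (∀ e, 0 ≤ f e ∧ f e ≤ 1) ∧ (∀ e, e ∉ G.edgeSet → f e = 0) ∧ ∀ v, fracDeg f v ≤ 1

/-- `f` is a fractional perfect matching of `G`. -/
def IsFPM (G : SimpleGraph V) (f : Sym2 V → ℝ) : Prop :=
  (∀ e, 0 ≤ f e ∧ f e ≤ 1) ∧ (∀ e, e ∉ G.edgeSet → f e = 0) ∧ ∀ v, fracDeg f v = 1

/-- `E(f)`: the set of edges with positive weight. -/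
noncomputable def fSupp (f : Sym2 V → ℝ) : Finset (Sym2 V) :=
  Finset.univ.filter (fun e => 0 < f e)

/-- Number of edges of `F` containing `v` (the degree of `v` in the subgraph with edge set `F`). -/
noncomputable def edgeDeg (F : Finset (Sym2 V)) (v : V) : ℕ :=
  (F.filter (fun e => v ∈ e)).card

/-- The set of vertices incident to some edge of `F`. -/
noncomputable def vertSet (F : Finset (Sym2 V)) : Finset V :=
  Finset.univ.filter (fun v => ∃ e ∈ F, v ∈ e)

/-- Two edge-weight functions are equivalent: same incident sums at every vertex. -/
def Equiv' (f f' : Sym2 V → ℝ) : Prop := ∀ v : V, fracDeg f v = fracDeg f' v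

/-- `F` consists of a single edge. -/
def IsSingleEdge (F : Finset (Sym2 V)) : Prop := ∃ e : Sym2 V, F = {e}

/-- `F` is the edge set of an odd cycle. -/
def IsOddCycleSet (F : Finset (Sym2 V)) : Prop :=
  ∃ (v : V) (c : (SimpleGraph.fromEdgeSet (↑F : Set (Sym2 V))).Walk v v),
    c.IsCycle ∧ Odd c.length ∧ c.edges.toFinset = F

/-- Two edge sets are vertex-disjoint. -/
def VDisj (F F' : Finset (Sym2 V)) : Prop :=
  ∀ v : V, (∃ e ∈ F, v ∈ e) → ¬ ∃ e ∈ F', v ∈ e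

/-- Every connected component of the subgraph with edge set `F` (ignoring isolated
vertices) is either a single edge or an odd cycle, expressed via a partition of `F`
into pairwise vertex-disjoint such pieces. -/
def EdgesAndOddCycles (F : Finset (Sym2 V)) : Prop :=
  ∃ P : Finset (Finset (Sym2 V)),
    (∀ A ∈ P, IsSingleEdge A ∨ IsOddCycleSet A) ∧
    (∀ A ∈ P, ∀ B ∈ P, A ≠ B → VDisj A B) ∧
    P.biUnion id = F

/-- The family `P` witnesses that `f` is a `δ`-Partitionable fractional perfect matching. -/
def IsPartitionWitness (f : Sym2 V → ℝ) (δ : ℕ) (P : Fin δ → Finset (Sym2 V)) : Prop :=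
  (∀ j, (P j).Nonempty) ∧
  (∀ j k, j ≠ k → VDisj (P j) (P k)) ∧
  (∀ j, P j ⊆ fSupp f) ∧
  (∀ e ∈ fSupp f, ∃ j, e ∈ P j) ∧
  ∀ j, ∑ e ∈ P j, f e = (Fintype.card V : ℝ) / (2 * δ)

/-- `f` is `δ`-Partitionable. -/
def IsDeltaPartitionable (f : Sym2 V → ℝ) (δ : ℕ) : Prop :=
  ∃ P : Fin δ → Finset (Sym2 V), IsPartitionWitness f δ P

-- auxiliary lemma for the backward direction: fracDeg computation
lemma aux_fracDeg_pair (f : Sym2 V → ℝ) (x y z : V) (hxy : x ≠ y) (hxz : x ≠ z) (hyz : y ≠ z)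
    (hsupp : ∀ e : Sym2 V, x ∈ e → f e ≠ 0 → e = s(x,y) ∨ e = s(x,z))
    (hv1 : f s(x,y) = 1/2) (hv2 : f s(x,z) = 1/2) :
    fracDeg f x = 1 := by
  have hne : (s(x,y) : Sym2 V) ≠ s(x,z) := by
    simp only [ne_eq, Sym2.eq_iff, not_or]
    constructor
    · rintro ⟨-, h⟩; exact hyz h
    · rintro ⟨h, -⟩; exact hxz h
  have hsub : ({s(x,y), s(x,z)} : Finset (Sym2 V)) ⊆ Finset.univ.filter (fun e : Sym2 V => x ∈ e) := by
    intro e he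
    simp only [Finset.mem_insert, Finset.mem_singleton] at he
    rcases he with rfl | rfl <;> simp
  rw [fracDeg, ← Finset.sum_subset hsub]
  · rw [Finset.sum_pair hne, hv1, hv2]; norm_num
  · intro e he hne'
    simp only [Finset.mem_filter] at he
    by_contra h
    rcases hsupp e he.2 h with rfl | rfl <;> simp at hne'

lemma perm3 {a b c : V} : ({a,b,c} : Finset V) = {b,a,c} := by
  ext x; simp only [mem_insert, mem_singleton]; tauto

lemma perm3' {a b c : V} : ({a,b,c} : Finset V) = {c,a,b} := by
  ext x; simp only [mem_insert, mem_singleton]; tauto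

lemma backward_dir (G : SimpleGraph V) (δ : ℕ) (hδ : 1 ≤ δ) (hV : Fintype.card V = 3 * δ)
    (W : Fin δ → Finset V)
    (hcard : ∀ j, (W j).card = 3)
    (hdisj : ∀ j k, j ≠ k → Disjoint (W j) (W k))
    (hcov : ∀ v : V, ∃ j, v ∈ W j)
    (hadj : ∀ j, ∀ u ∈ W j, ∀ v ∈ W j, u ≠ v → G.Adj u v) :
    ∃ f : Sym2 V → ℝ, IsFPM G f ∧ IsDeltaPartitionable f δ := by
  have hδ0 : (δ : ℝ) ≠ 0 := by positivity
  set f : Sym2 V → ℝ := fun e => if (¬ e.IsDiag ∧ ∃ j, ∀ x ∈ e, x ∈ W j) then 1/2 else 0 with hfdef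
  have huniq : ∀ (x : V) (j k : Fin δ), x ∈ W j → x ∈ W k → j = k := by
    intro x j k hj hk
    by_contra h
    exact Finset.disjoint_left.mp (hdisj j k h) hj hk
  have hfval : ∀ (j : Fin δ) (e : Sym2 V), ¬ e.IsDiag → (∀ x ∈ e, x ∈ W j) → f e = 1/2 := by
    intro j e hd hm
    simp only [hfdef]
    rw [if_pos ⟨hd, j, hm⟩]
  have hfne : ∀ e : Sym2 V, f e ≠ 0 → ¬ e.IsDiag ∧ ∃ j, ∀ x ∈ e, x ∈ W j := by
    intro e h
    by_contra hc
    simp only [hfdef, if_neg hc] at h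
    exact h rfl
  have hbd : ∀ e, 0 ≤ f e ∧ f e ≤ 1 := by
    intro e
    simp only [hfdef]
    split <;> norm_num
  -- triangle edges
  have hpair : ∀ (j : Fin δ) (a b : V), a ∈ W j → b ∈ W j → a ≠ b → f s(a,b) = 1/2 := by
    intro j a b ha hb hab
    apply hfval j
    · rw [Sym2.isDiag_iff_proj_eq]; exact hab
    · intro x hx
      rcases Sym2.mem_iff.mp hx with rfl | rfl <;> assumption
  -- fracDeg
  have hdeg : ∀ v : V, fracDeg f v = 1 := by
    intro v
    obtain ⟨j, hj⟩ := hcov v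
    obtain ⟨a, b, c, hab, hac, hbc, hW⟩ := Finset.card_eq_three.mp (hcard j)
    have key : ∀ x y z : V, x ≠ y → x ≠ z → y ≠ z → W j = ({x,y,z} : Finset V) →
        fracDeg f x = 1 := by
      intro x y z hxy hxz hyz hWj
      have hxW : x ∈ W j := by rw [hWj]; simp
      have hyW : y ∈ W j := by rw [hWj]; simp
      have hzW : z ∈ W j := by rw [hWj]; simp
      apply aux_fracDeg_pair f x y z hxy hxz hyz
      · intro e hxe hne0
        obtain ⟨hd, k, hk⟩ := hfne e hne0
        have hkj : k = j := huniq x k j (hk x hxe) hxW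
        subst hkj
        obtain ⟨t, rfl⟩ := Sym2.mem_iff_exists.mp hxe
        have htW : t ∈ W k := hk t (Sym2.mem_mk_right x t)
        have htx : t ≠ x := by
          intro h; subst h; exact hd (Sym2.isDiag_iff_proj_eq |>.mpr rfl)
        rw [hWj] at htW
        simp only [mem_insert, mem_singleton] at htW
        rcases htW with rfl | rfl | rfl
        · exact absurd rfl htx
        · left; rfl
        · right; rfl
      · exact hpair j x y hxW hyW hxy
      · exact hpair j x z hxW hzW hxz
    rw [hW] at hj
    simp only [mem_insert, mem_singleton] at hj
    rcases hj with rfl | rfl | rfl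
    · exact key v b c hab hac hbc hW
    · exact key v a c (Ne.symm hab) hbc hac (hW.trans perm3)
    · exact key v a b (Ne.symm hac) (Ne.symm hbc) hab (hW.trans perm3')
  refine ⟨f, ⟨hbd, ?_, hdeg⟩, ?_⟩
  · -- vanishes off edges
    intro e he
    by_contra h
    obtain ⟨hd, j, hj⟩ := hfne e h
    induction e using Sym2.ind with
    | h x y =>
      have hxy : x ≠ y := by
        intro hh; exact hd (Sym2.isDiag_iff_proj_eq |>.mpr hh)
      exact he ((G.mem_edgeSet).mpr
        (hadj j x (hj x (Sym2.mem_mk_left x y)) y (hj y (Sym2.mem_mk_right x y)) hxy))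
  · -- partitionable
    refine ⟨fun j => ((W j).sym2).filter (fun e => ¬ e.IsDiag), ?_, ?_, ?_, ?_, ?_⟩
    · intro j
      obtain ⟨a, b, c, hab, hac, hbc, hW⟩ := Finset.card_eq_three.mp (hcard j)
      refine ⟨s(a,b), ?_⟩
      rw [mem_filter, Finset.mem_sym2_iff]
      constructor
      · intro y hy
        rcases Sym2.mem_iff.mp hy with rfl | rfl <;> rw [hW] <;> simp
      · rw [Sym2.isDiag_iff_proj_eq]; exact hab
    · intro j k hjk v ⟨e, he, hve⟩ ⟨e', he', hve'⟩
      rw [mem_filter, Finset.mem_sym2_iff] at he he'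
      exact Finset.disjoint_left.mp (hdisj j k hjk) (he.1 v hve) (he'.1 v hve')
    · intro j e he
      rw [mem_filter, Finset.mem_sym2_iff] at he
      rw [fSupp, mem_filter]
      refine ⟨mem_univ _, ?_⟩
      rw [hfval j e he.2 he.1]
      norm_num
    · intro e he
      rw [fSupp, mem_filter] at he
      obtain ⟨hd, j, hj⟩ := hfne e (ne_of_gt he.2)
      exact ⟨j, by rw [mem_filter, Finset.mem_sym2_iff]; exact ⟨hj, hd⟩⟩
    · intro j
      obtain ⟨a, b, c, hab, hac, hbc, hW⟩ := Finset.card_eq_three.mp (hcard j)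
      have haW : a ∈ W j := by rw [hW]; simp
      have hbW : b ∈ W j := by rw [hW]; simp
      have hcW : c ∈ W j := by rw [hW]; simp
      have hPeq : ((W j).sym2).filter (fun e => ¬ e.IsDiag)
          = ({s(a,b), s(a,c), s(b,c)} : Finset (Sym2 V)) := by
        ext e
        rw [mem_filter, Finset.mem_sym2_iff]
        induction e using Sym2.ind with
        | h x y =>
          simp only [mem_insert, mem_singleton, Sym2.eq_iff, Sym2.isDiag_iff_proj_eq]
          constructor
          · rintro ⟨hm, hxy⟩
            have hx := hm x (Sym2.mem_mk_left x y)
            have hy := hm y (Sym2.mem_mk_right x y)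
            rw [hW] at hx hy
            simp only [mem_insert, mem_singleton] at hx hy
            rcases hx with rfl | rfl | rfl <;> rcases hy with rfl | rfl | rfl <;> tauto
          · intro h
            constructor
            · intro z hz
              rcases Sym2.mem_iff.mp hz with rfl | rfl <;>
                rcases h with (⟨h1,h2⟩|⟨h1,h2⟩) | (⟨h1,h2⟩|⟨h1,h2⟩) | (⟨h1,h2⟩|⟨h1,h2⟩) <;>
                subst h1 <;> subst h2 <;> assumption
            · rcases h with (⟨h1,h2⟩|⟨h1,h2⟩) | (⟨h1,h2⟩|⟨h1,h2⟩) | (⟨h1,h2⟩|⟨h1,h2⟩) <;>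
                subst h1 <;> subst h2 <;>
                (first | exact hab | exact hac | exact hbc | exact hab.symm | exact hac.symm | exact hbc.symm)
      have e1 : (s(a,b) : Sym2 V) ≠ s(a,c) := by
        simp only [ne_eq, Sym2.eq_iff, not_or]
        exact ⟨fun h => hbc h.2, fun h => hac h.1⟩
      have e2 : (s(a,b) : Sym2 V) ≠ s(b,c) := by
        simp only [ne_eq, Sym2.eq_iff, not_or]
        exact ⟨fun h => hab h.1, fun h => hac h.1⟩
      have e3 : (s(a,c) : Sym2 V) ≠ s(b,c) := by
        simp only [ne_eq, Sym2.eq_iff, not_or]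
        exact ⟨fun h => hab h.1, fun h => hbc (h.2.symm)⟩
      simp only [hPeq]
      rw [Finset.sum_insert (by simp [e1, e2]), Finset.sum_insert (by simp [e3]),
        Finset.sum_singleton]
      rw [hpair j a b haW hbW hab, hpair j a c haW hcW hac, hpair j b c hbW hcW hbc, hV]
      push_cast
      field_simp
      ring

lemma filter_mem_pair {A : Finset V} {x y : V} (hxy : x ≠ y) (hx : x ∈ A) (hy : y ∈ A) :
    A.filter (fun a => a ∈ (s(x,y) : Sym2 V)) = {x, y} := by
  ext a
  simp only [mem_filter, Sym2.mem_iff, mem_insert, mem_singleton]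
  constructor
  · rintro ⟨-, h⟩; exact h
  · rintro (rfl | rfl) <;> simp_all

lemma forward_dir (G : SimpleGraph V) (δ : ℕ) (hδ : 1 ≤ δ) (hV : Fintype.card V = 3 * δ)
    (f : Sym2 V → ℝ) (hf : IsFPM G f) (P : Fin δ → Finset (Sym2 V))
    (hP : IsPartitionWitness f δ P) :
    ∃ W : Fin δ → Finset V,
      (∀ j, (W j).card = 3) ∧
      (∀ j k, j ≠ k → Disjoint (W j) (W k)) ∧
      (∀ v : V, ∃ j, v ∈ W j) ∧
      (∀ j, ∀ u ∈ W j, ∀ v ∈ W j, u ≠ v → G.Adj u v) := by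
  have hδ0 : (δ : ℝ) ≠ 0 := by positivity
  obtain ⟨hbd, hedge, hdeg⟩ := hf
  obtain ⟨hne, hvd, hsub, hcov, hsum⟩ := hP
  have hpos : ∀ (j : Fin δ), ∀ e ∈ P j, 0 < f e := by
    intro j e he
    have := hsub j he
    rw [fSupp, mem_filter] at this
    exact this.2
  have hEdge : ∀ e, 0 < f e → e ∈ G.edgeSet := by
    intro e he
    by_contra h
    rw [hedge e h] at he
    exact lt_irrefl 0 he
  have hnd : ∀ e, 0 < f e → ¬ e.IsDiag := fun e he =>
    G.not_isDiag_of_mem_edgeSet (hEdge e he)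
  have hVmem : ∀ (j : Fin δ), ∀ e ∈ P j, ∀ v ∈ e, v ∈ vertSet (P j) := by
    intro j e he v hv
    rw [vertSet, mem_filter]
    exact ⟨mem_univ _, e, he, hv⟩
  have keyA : ∀ (j : Fin δ) (e : Sym2 V) (v : V), 0 < f e → v ∈ e → v ∈ vertSet (P j) →
      e ∈ P j := by
    intro j e v he hve hvj
    have heS : e ∈ fSupp f := by rw [fSupp, mem_filter]; exact ⟨mem_univ _, he⟩
    obtain ⟨k, hk⟩ := hcov e heS
    rcases eq_or_ne k j with rfl | hkj
    · exact hk
    · exfalso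
      rw [vertSet, mem_filter] at hvj
      exact hvd j k (Ne.symm hkj) v hvj.2 ⟨e, hk, hve⟩
  have hfd : ∀ (j : Fin δ), ∀ u ∈ vertSet (P j),
      fracDeg f u = ∑ e ∈ (P j).filter (fun e => u ∈ e), f e := by
    intro j u hu
    rw [fracDeg]
    apply (Finset.sum_subset ?_ ?_).symm
    · intro e he
      rw [mem_filter] at he ⊢
      exact ⟨mem_univ _, he.2⟩
    · intro e he hne'
      rw [mem_filter] at he hne'
      by_contra h
      have hf0 : 0 < f e := lt_of_le_of_ne (hbd e).1 (Ne.symm h)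
      exact hne' ⟨keyA j e u hf0 he.2 hu, he.2⟩
  -- cardinality of vertSet (P j) is 3
  have hc3 : ∀ j : Fin δ, (vertSet (P j)).card = 3 := by
    intro j
    have hcalc : ((vertSet (P j)).card : ℝ) = ∑ e ∈ P j, 2 * f e := by
      calc ((vertSet (P j)).card : ℝ) = ∑ u ∈ vertSet (P j), 1 := by simp
        _ = ∑ u ∈ vertSet (P j), fracDeg f u := by
            apply Finset.sum_congr rfl; intro u hu; rw [hdeg u]
        _ = ∑ u ∈ vertSet (P j), ∑ e ∈ (P j).filter (fun e => u ∈ e), f e := by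
            apply Finset.sum_congr rfl; intro u hu; exact hfd j u hu
        _ = ∑ u ∈ vertSet (P j), ∑ e ∈ P j, if u ∈ e then f e else 0 := by
            apply Finset.sum_congr rfl; intro u hu; rw [Finset.sum_filter]
        _ = ∑ e ∈ P j, ∑ u ∈ vertSet (P j), if u ∈ e then f e else 0 := Finset.sum_comm
        _ = ∑ e ∈ P j, 2 * f e := by
            apply Finset.sum_congr rfl
            intro e he
            rw [← Finset.sum_filter]
            have hfe := hpos j e he
            have hnd' := hnd e hfe
            induction e using Sym2.ind with
            | h x y =>
              have hxy : x ≠ y := fun h => hnd' ((Sym2.isDiag_iff_proj_eq).mpr h)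
              rw [filter_mem_pair hxy (hVmem j _ he x (Sym2.mem_mk_left x y))
                (hVmem j _ he y (Sym2.mem_mk_right x y))]
              rw [Finset.sum_pair hxy]
              ring
    have : ((vertSet (P j)).card : ℝ) = 3 := by
      rw [hcalc, ← Finset.mul_sum, hsum j, hV]
      push_cast
      field_simp
    exact_mod_cast this
  refine ⟨fun j => vertSet (P j), hc3, ?_, ?_, ?_⟩
  · intro j k hjk
    rw [Finset.disjoint_left]
    intro x hxj hxk
    have hxj' : x ∈ vertSet (P j) := hxj
    have hxk' : x ∈ vertSet (P k) := hxk
    rw [vertSet, mem_filter] at hxj' hxk'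
    exact hvd j k hjk x hxj'.2 hxk'.2
  · intro v
    have h1 : fracDeg f v = 1 := hdeg v
    have : ∃ e ∈ Finset.univ.filter (fun e : Sym2 V => v ∈ e), f e ≠ 0 := by
      apply Finset.exists_ne_zero_of_sum_ne_zero
      rw [← fracDeg, h1]; norm_num
    obtain ⟨e, he, hfe⟩ := this
    rw [mem_filter] at he
    have hp : 0 < f e := lt_of_le_of_ne (hbd e).1 (Ne.symm hfe)
    have heS : e ∈ fSupp f := by rw [fSupp, mem_filter]; exact ⟨mem_univ _, hp⟩
    obtain ⟨j, hj⟩ := hcov e heS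
    exact ⟨j, hVmem j e hj v he.2⟩
  · intro j
    obtain ⟨u, v, w, huv, huw, hvw, hset⟩ := Finset.card_eq_three.mp (hc3 j)
    have hkey : ∀ x y z : V, vertSet (P j) = ({x,y,z} : Finset V) → x ≠ y → x ≠ z → y ≠ z →
        f s(x,y) + f s(x,z) = 1 := by
      intro x y z hs hxy hxz hyz
      have hxV : x ∈ vertSet (P j) := by rw [hs]; simp
      have hsub2 : (P j).filter (fun e => x ∈ e) ⊆ ({s(x,y), s(x,z)} : Finset (Sym2 V)) := by
        intro e he
        rw [mem_filter] at he
        have hfe := hpos j e he.1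
        obtain ⟨t, rfl⟩ := Sym2.mem_iff_exists.mp he.2
        have htV : t ∈ vertSet (P j) := hVmem j _ he.1 t (Sym2.mem_mk_right x t)
        have htx : t ≠ x := by
          intro h; subst h
          exact hnd _ hfe ((Sym2.isDiag_iff_proj_eq).mpr rfl)
        rw [hs] at htV
        simp only [mem_insert, mem_singleton] at htV ⊢
        rcases htV with rfl | rfl | rfl
        · exact absurd rfl htx
        · left; rfl
        · right; rfl
      have hzero : ∀ e ∈ ({s(x,y), s(x,z)} : Finset (Sym2 V)),
          e ∉ (P j).filter (fun e => x ∈ e) → f e = 0 := by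
        intro e he hne'
        by_contra h
        have hp : 0 < f e := lt_of_le_of_ne (hbd e).1 (Ne.symm h)
        have hxe : x ∈ e := by
          simp only [mem_insert, mem_singleton] at he
          rcases he with rfl | rfl <;> simp
        exact hne' (mem_filter.mpr ⟨keyA j e x hp hxe hxV, hxe⟩)
      have hpairne : (s(x,y) : Sym2 V) ≠ s(x,z) := by
        simp only [ne_eq, Sym2.eq_iff, not_or]
        exact ⟨fun h => hyz h.2, fun h => hxz h.1⟩
      have := hdeg x
      rw [hfd j x hxV, Finset.sum_subset hsub2 hzero, Finset.sum_pair hpairne] at this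
      exact this
    have h1 := hkey u v w hset huv huw hvw
    have h2 := hkey v u w (hset.trans perm3) (Ne.symm huv) hvw huw
    have h3 := hkey w u v (hset.trans perm3') (Ne.symm huw) (Ne.symm hvw) huv
    rw [Sym2.eq_swap (a := v) (b := u)] at h2
    rw [Sym2.eq_swap (a := w) (b := u), Sym2.eq_swap (a := w) (b := v)] at h3
    have hauv : f s(u,v) = 1/2 := by linarith
    have hauw : f s(u,w) = 1/2 := by linarith
    have havw : f s(v,w) = 1/2 := by linarith
    have aduv : G.Adj u v := (G.mem_edgeSet).mp (hEdge _ (by rw [hauv]; norm_num))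
    have aduw : G.Adj u w := (G.mem_edgeSet).mp (hEdge _ (by rw [hauw]; norm_num))
    have advw : G.Adj v w := (G.mem_edgeSet).mp (hEdge _ (by rw [havw]; norm_num))
    intro p hp q hq hpq
    have hp' : p ∈ vertSet (P j) := hp
    have hq' : q ∈ vertSet (P j) := hq
    rw [hset] at hp' hq'
    clear hp hq
    rename' hp' => hp, hq' => hq
    simp only [mem_insert, mem_singleton] at hp hq
    rcases hp with rfl | rfl | rfl <;> rcases hq with rfl | rfl | rfl <;>
      first
        | exact absurd rfl hpq
        | exact aduv | exact aduw | exact advw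
        | exact aduv.symm | exact aduw.symm | exact advw.symm

/-- for `|V| = 3δ`, `G` has a `(|V|/3)`-Partitionable fractional perfect
matching iff `V` can be partitioned into `δ` triples of vertices each inducing a
triangle in `G`. -/
theorem third_partitionable_iff_partition_into_triangles (G : SimpleGraph V)
    (hG : ∀ v : V, ∃ u, G.Adj u v) (δ : ℕ) (hδ : 1 ≤ δ)
    (hV : Fintype.card V = 3 * δ) :
    (∃ f : Sym2 V → ℝ, IsFPM G f ∧ IsDeltaPartitionable f δ) ↔
    ∃ W : Fin δ → Finset V,
      (∀ j, (W j).card = 3) ∧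
      (∀ j k, j ≠ k → Disjoint (W j) (W k)) ∧
      (∀ v : V, ∃ j, v ∈ W j) ∧
      (∀ j, ∀ u ∈ W j, ∀ v ∈ W j, u ≠ v → G.Adj u v) := by
  constructor
  · rintro ⟨f, hf, P, hP⟩
    exact forward_dir G δ hδ hV f hf P hP
  · rintro ⟨W, h1, h2, h3, h4⟩
    exact backward_dir G δ hδ hV W h1 h2 h3 h4
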